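/- arXiv:1508.04918 — 2 statements merged into one kernel-verified Lean document; each statement's English description precedes it below -/
import Mathlib

section
/- For all real x, y ≥ 0 and all natural numbers n, m, one has L D(n,m;·,·)(x,y) = 𝓛 D(·,·;x,y)(n,m), where L f(x,y) = ∫₀¹∫₀¹ (f(x(1−u)+yv, y(1−v)+xu) − f(x,y)) du dv acts on the continuous variables (x,y), and 𝓛 g(n,m) = Σ_{k=0}^{n} Σ_{l=0}^{m} (1/((n+1)(m+1))) (g(n−k+l, m−l+k) − g(n,m)) acts on the discrete variables (n,m). That is, the Immediate Exchange Model and the discrete dual redistribution model are dual at the level of generators with duality function D. -/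
open MeasureTheory Finset

/-- The duality polynomial `D(n,m;x,y) = xⁿ yᵐ / ((n+1)! (m+1)!)`. -/
noncomputable def dualityD (n m : ℕ) (x y : ℝ) : ℝ :=
  x ^ n * y ^ m / ((Nat.factorial (n + 1) : ℝ) * (Nat.factorial (m + 1) : ℝ))

open intervalIntegral in
lemma beta_nat : ∀ (b a : ℕ), (∫ u in (0:ℝ)..1, u ^ a * (1 - u) ^ b)
    = (Nat.factorial a * Nat.factorial b : ℝ) / Nat.factorial (a + b + 1) := by
  intro b
  induction b with
  | zero =>
    intro a
    simp only [pow_zero, mul_one, integral_pow, Nat.factorial_zero, Nat.cast_one,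
      Nat.add_zero, Nat.factorial_succ]
    push_cast
    have : ((a:ℝ) + 1) ≠ 0 := by positivity
    have : (Nat.factorial a : ℝ) ≠ 0 := by positivity
    field_simp
    simp
  | succ b ih =>
    intro a
    have hu : ∀ z ∈ Set.uIcc (0:ℝ) 1, HasDerivAt (fun t : ℝ => (1 - t) ^ (b + 1))
        (-((b+1 : ℝ) * (1 - z) ^ b)) z := by
      intro z _
      have h1 : HasDerivAt (fun t : ℝ => 1 - t) (-1) z := by
        simpa using (hasDerivAt_id z).const_sub 1
      have := h1.fun_pow (b+1)
      simpa [mul_comm, mul_assoc, mul_left_comm] using this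
    have hv : ∀ z ∈ Set.uIcc (0:ℝ) 1, HasDerivAt (fun t : ℝ => t ^ (a + 1) / (a + 1))
        (z ^ a) z := by
      intro z _
      have := (hasDerivAt_pow (a+1) z).div_const ((a:ℝ)+1)
      have ha : ((a:ℝ)+1) ≠ 0 := by positivity
      simpa [mul_comm, mul_div_assoc, ha, Nat.cast_add] using this
    have hIu : IntervalIntegrable (fun z : ℝ => -((b+1:ℝ) * (1 - z) ^ b)) volume 0 1 :=
      (Continuous.neg (by continuity)).intervalIntegrable _ _
    have hIv : IntervalIntegrable (fun z : ℝ => z ^ a) volume 0 1 :=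
      (continuous_pow a).intervalIntegrable _ _
    have hparts := intervalIntegral.integral_mul_deriv_eq_deriv_mul hu hv hIu hIv
    have hcomm : (∫ u in (0:ℝ)..1, u ^ a * (1 - u) ^ (b+1))
        = ∫ z in (0:ℝ)..1, (1 - z) ^ (b+1) * z ^ a := by
      congr 1; funext z; ring
    rw [hcomm, hparts]
    have hrw : (fun z : ℝ => -((b+1:ℝ) * (1 - z) ^ b) * (z ^ (a+1) / (a+1)))
        = fun z : ℝ => (-((b+1:ℝ) / (a+1))) * (z ^ (a+1) * (1 - z) ^ b) := by
      funext z; ring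
    rw [hrw, intervalIntegral.integral_const_mul, ih (a+1)]
    have h1 : ((a:ℝ)+1) ≠ 0 := by positivity
    have h2 : (Nat.factorial (a+1+b+1) : ℝ) ≠ 0 := by positivity
    have h3 : (Nat.factorial (a+(b+1)+1) : ℝ) ≠ 0 := by positivity
    have e1 : a + 1 + b + 1 = a + (b+1) + 1 := by omega
    rw [e1]
    simp only [Nat.factorial_succ]
    push_cast
    field_simp
    ring


/-- Generator duality for the Immediate Exchange Model: `L D(n,m;·,·)(x,y) =
𝓛 D(·,·;x,y)(n,m)`, where `L f(x,y) = ∫₀¹∫₀¹ (f(x(1−u)+yv, y(1−v)+xu) − f(x,y)) du dv` and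
`𝓛 g(n,m) = Σ_{k=0}^{n} Σ_{l=0}^{m} (1/((n+1)(m+1))) (g(n−k+l, m−l+k) − g(n,m))`. -/
theorem immediate_exchange_generator_duality
    (x y : ℝ) (hx : 0 ≤ x) (hy : 0 ≤ y) (n m : ℕ) :
    (∫ u in (0:ℝ)..1, ∫ v in (0:ℝ)..1,
        (dualityD n m (x * (1 - u) + y * v) (y * (1 - v) + x * u) - dualityD n m x y))
      = ∑ k ∈ Finset.range (n + 1), ∑ l ∈ Finset.range (m + 1),
          (1 / (((n : ℝ) + 1) * ((m : ℝ) + 1))) *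
            (dualityD (n - k + l) (m - l + k) x y - dualityD n m x y) := by
  set F : ℝ := (Nat.factorial (n + 1) : ℝ) * (Nat.factorial (m + 1) : ℝ) with hF
  set c : ℕ → ℕ → ℝ := fun i j =>
    x ^ i * y ^ (n - i) * (n.choose i : ℝ) * (y ^ j * x ^ (m - j)) * (m.choose j : ℝ) / F
    with hc
  set B : ℕ → ℕ → ℝ := fun a b =>
    (Nat.factorial a * Nat.factorial b : ℝ) / Nat.factorial (a + b + 1) with hB
  -- expansion of the polynomial
  have hexp : ∀ u v : ℝ, dualityD n m (x * (1 - u) + y * v) (y * (1 - v) + x * u)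
      = ∑ i ∈ Finset.range (n + 1), ∑ j ∈ Finset.range (m + 1),
          c i j * (u ^ (m - j) * (1 - u) ^ i) * (v ^ (n - i) * (1 - v) ^ j) := by
    intro u v
    simp only [dualityD, hc]
    rw [add_pow, add_pow, Finset.sum_mul_sum, Finset.sum_div]
    refine Finset.sum_congr rfl fun i _ => ?_
    rw [Finset.sum_div]
    refine Finset.sum_congr rfl fun j _ => ?_
    simp only [mul_pow]
    ring
  -- inner integral
  have hinner : ∀ u : ℝ,
      (∫ v in (0:ℝ)..1,
        (dualityD n m (x * (1 - u) + y * v) (y * (1 - v) + x * u) - dualityD n m x y))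
      = (∑ i ∈ Finset.range (n + 1), ∑ j ∈ Finset.range (m + 1),
          (c i j * B (n - i) j) * (u ^ (m - j) * (1 - u) ^ i)) - dualityD n m x y := by
    intro u
    have hcont1 : Continuous fun v : ℝ =>
        dualityD n m (x * (1 - u) + y * v) (y * (1 - v) + x * u) := by
      simp only [dualityD]; fun_prop
    rw [intervalIntegral.integral_sub (hcont1.intervalIntegrable _ _)
      (intervalIntegrable_const), intervalIntegral.integral_const]
    simp only [sub_zero, one_smul]
    congr 1
    simp only [hexp]
    rw [intervalIntegral.integral_finset_sum (fun i _ =>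
      (Continuous.intervalIntegrable (by fun_prop) _ _))]
    refine Finset.sum_congr rfl fun i _ => ?_
    rw [intervalIntegral.integral_finset_sum (fun j _ =>
      (Continuous.intervalIntegrable (by fun_prop) _ _))]
    refine Finset.sum_congr rfl fun j _ => ?_
    rw [intervalIntegral.integral_const_mul, beta_nat]
    simp only [hB]
    ring
  simp only [hinner]
  -- outer integral
  have houter :
      (∫ u in (0:ℝ)..1,
        ((∑ i ∈ Finset.range (n + 1), ∑ j ∈ Finset.range (m + 1),
          (c i j * B (n - i) j) * (u ^ (m - j) * (1 - u) ^ i)) - dualityD n m x y))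
      = (∑ i ∈ Finset.range (n + 1), ∑ j ∈ Finset.range (m + 1),
          (c i j * B (n - i) j) * B (m - j) i) - dualityD n m x y := by
    rw [intervalIntegral.integral_sub
      ((Continuous.intervalIntegrable (by fun_prop) _ _))
      (intervalIntegrable_const), intervalIntegral.integral_const]
    simp only [sub_zero, one_smul]
    congr 1
    rw [intervalIntegral.integral_finset_sum (fun i _ =>
      (Continuous.intervalIntegrable (by fun_prop) _ _))]
    refine Finset.sum_congr rfl fun i _ => ?_
    rw [intervalIntegral.integral_finset_sum (fun j _ =>
      (Continuous.intervalIntegrable (by fun_prop) _ _))]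
    refine Finset.sum_congr rfl fun j _ => ?_
    rw [intervalIntegral.integral_const_mul, beta_nat]
  rw [houter]
  -- split the right-hand side
  have hnm : (((n:ℝ) + 1) * ((m:ℝ) + 1)) ≠ 0 := by positivity
  have hrhs : ∑ k ∈ Finset.range (n + 1), ∑ l ∈ Finset.range (m + 1),
        (1 / (((n : ℝ) + 1) * ((m : ℝ) + 1))) *
          (dualityD (n - k + l) (m - l + k) x y - dualityD n m x y)
      = (∑ k ∈ Finset.range (n + 1), ∑ l ∈ Finset.range (m + 1),
          (1 / (((n : ℝ) + 1) * ((m : ℝ) + 1))) * dualityD (n - k + l) (m - l + k) x y)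
        - dualityD n m x y := by
    simp only [mul_sub, Finset.sum_sub_distrib, Finset.sum_const, Finset.card_range,
      nsmul_eq_mul]
    congr 1
    push_cast
    field_simp
  rw [hrhs]
  congr 1
  -- reindex the right-hand side sum
  conv_rhs => rw [← Finset.sum_range_reflect]
  refine Finset.sum_congr rfl fun i hi => ?_
  conv_rhs => rw [← Finset.sum_range_reflect]
  refine Finset.sum_congr rfl fun j hj => ?_
  have hi' : i ≤ n := by simpa [Nat.lt_succ_iff] using hi
  have hj' : j ≤ m := by simpa [Nat.lt_succ_iff] using hj
  have e1 : n + 1 - 1 - i = n - i := by omega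
  have e2 : m + 1 - 1 - j = m - j := by omega
  rw [e1, e2]
  simp only [Nat.sub_sub_self hi', Nat.sub_sub_self hj']
  -- termwise identity
  have hc1 : (n.choose i : ℝ) * (Nat.factorial i) * (Nat.factorial (n - i))
      = (Nat.factorial n) := by
    exact_mod_cast congrArg (Nat.cast (R := ℝ)) (Nat.choose_mul_factorial_mul_factorial hi')
  have hc2 : (m.choose j : ℝ) * (Nat.factorial j) * (Nat.factorial (m - j))
      = (Nat.factorial m) := by
    exact_mod_cast congrArg (Nat.cast (R := ℝ)) (Nat.choose_mul_factorial_mul_factorial hj')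
  have hfn : (Nat.factorial (n + 1) : ℝ) = ((n:ℝ) + 1) * Nat.factorial n := by
    rw [Nat.factorial_succ]; push_cast; ring
  have hfm : (Nat.factorial (m + 1) : ℝ) = ((m:ℝ) + 1) * Nat.factorial m := by
    rw [Nat.factorial_succ]; push_cast; ring
  have ha1 : (n - i) + j = j + (n - i) := Nat.add_comm _ _
  have ha2 : (m - j) + i = i + (m - j) := Nat.add_comm _ _
  simp only [hc, hB, dualityD, hF, ha1, ha2]
  rw [pow_add, pow_add, hfn, hfm]
  have d1 : (Nat.factorial (i + (m - j) + 1) : ℝ) ≠ 0 := by positivity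
  have d2 : (Nat.factorial (j + (n - i) + 1) : ℝ) ≠ 0 := by positivity
  have d3 : (Nat.factorial n : ℝ) ≠ 0 := by positivity
  have d4 : (Nat.factorial m : ℝ) ≠ 0 := by positivity
  have d5 : ((n:ℝ) + 1) ≠ 0 := by positivity
  have d6 : ((m:ℝ) + 1) ≠ 0 := by positivity
  have key : (n.choose i : ℝ) * (m.choose j : ℝ) *
        ((Nat.factorial (n - i) : ℝ) * (Nat.factorial j)) *
        ((Nat.factorial (m - j) : ℝ) * (Nat.factorial i))
      = (Nat.factorial n : ℝ) * (Nat.factorial m : ℝ) := by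
    calc (n.choose i : ℝ) * (m.choose j : ℝ) *
          ((Nat.factorial (n - i) : ℝ) * (Nat.factorial j)) *
          ((Nat.factorial (m - j) : ℝ) * (Nat.factorial i))
        = ((n.choose i : ℝ) * (Nat.factorial i) * (Nat.factorial (n - i))) *
          ((m.choose j : ℝ) * (Nat.factorial j) * (Nat.factorial (m - j))) := by ring
      _ = _ := by rw [hc1, hc2]
  field_simp
  linear_combination (x ^ i * x ^ (m - j) * y ^ j * y ^ (n - i)) * key
end

section
/- For all real s,t > 0, the generator 𝓛 of the discrete dual process commutes with the SU(1,1) lowering operator K⁻₁ + K⁻₂: for every function f : ℕ² → ℝ and all (n,m) ∈ ℕ², 𝓛((K⁻₁+K⁻₂)f)(n,m) = (K⁻₁+K⁻₂)(𝓛 f)(n,m), where 𝓛 f(n,m) = Σ_{k=0}^{n} Σ_{l=0}^{m} r_{s,t}(n,m;k,l) (f(n−k+l, m−l+k) − f(n,m)), K⁻₁ f(n,m) = n f(n−1,m) and K⁻₂ f(n,m) = m f(n,m−1) (with the convention that the term vanishes when the prefactor is 0). -/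
open Finset Real

/-- Beta-binomial(n,s,t) probability mass function. -/
noncomputable def wBB (s t : ℝ) (n k : ℕ) : ℝ :=
  Real.Gamma ((n : ℝ) + 1) * Real.Gamma ((k : ℝ) + s) * Real.Gamma (((n - k : ℕ) : ℝ) + t) *
      Real.Gamma (s + t) /
    (Real.Gamma s * Real.Gamma t * Real.Gamma (s + t + n) * Real.Gamma ((k : ℝ) + 1) *
      Real.Gamma (((n - k : ℕ) : ℝ) + 1))

/-- Redistribution rates of the discrete dual process. -/
noncomputable def rRate (s t : ℝ) (n m k l : ℕ) : ℝ := wBB s t n k * wBB s t m l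

/-- Generator of the discrete dual process. -/
noncomputable def discGen (s t : ℝ) (f : ℕ → ℕ → ℝ) (n m : ℕ) : ℝ :=
  ∑ k ∈ Finset.range (n + 1), ∑ l ∈ Finset.range (m + 1),
    rRate s t n m k l * (f (n - k + l) (m - l + k) - f n m)

/-- The SU(1,1) lowering operator `K⁻₁+K⁻₂` acting on functions of two discrete variables:
`((K⁻₁+K⁻₂)f)(n,m) = n f(n−1,m) + m f(n,m−1)` (terms vanish when the prefactor is 0;
`n−1` denotes truncated subtraction on ℕ). -/
noncomputable def Kminus (f : ℕ → ℕ → ℝ) (n m : ℕ) : ℝ :=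
  (n : ℝ) * f (n - 1) m + (m : ℝ) * f n (m - 1)

lemma wBB_key (s t : ℝ) (hs : 0 < s) (ht : 0 < t) (n k : ℕ) (hk : k ≤ n) :
    ((n:ℝ) + 1 - k) * wBB s t (n+1) k + ((k:ℝ) + 1) * wBB s t (n+1) (k+1)
      = ((n:ℝ) + 1) * wBB s t n k := by
  obtain ⟨d, rfl⟩ : ∃ d, n = k + d := ⟨n - k, by omega⟩
  unfold wBB
  have e1 : k + d + 1 - k = d + 1 := by omega
  have e2 : k + d + 1 - (k+1) = d := by omega
  have e3 : k + d - k = d := by omega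
  rw [e1, e2, e3]
  push_cast
  have G1 : Real.Gamma ((k:ℝ)+(d:ℝ)+1+1) = ((k:ℝ)+(d:ℝ)+1) * Real.Gamma ((k:ℝ)+(d:ℝ)+1) :=
    Real.Gamma_add_one (by positivity)
  have G2 : Real.Gamma ((d:ℝ)+1+t) = ((d:ℝ)+t) * Real.Gamma ((d:ℝ)+t) := by
    rw [show ((d:ℝ)+1+t) = ((d:ℝ)+t)+1 by ring]
    exact Real.Gamma_add_one (by positivity)
  have G3 : Real.Gamma (s+t+((k:ℝ)+(d:ℝ)+1)) = (s+t+(k:ℝ)+(d:ℝ)) * Real.Gamma (s+t+((k:ℝ)+(d:ℝ))) := by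
    rw [show (s+t+((k:ℝ)+(d:ℝ)+1)) = (s+t+((k:ℝ)+(d:ℝ)))+1 by ring]
    rw [Real.Gamma_add_one (by positivity)]
    ring
  have G4 : Real.Gamma ((d:ℝ)+1+1) = ((d:ℝ)+1) * Real.Gamma ((d:ℝ)+1) :=
    Real.Gamma_add_one (by positivity)
  have G5 : Real.Gamma ((k:ℝ)+1+s) = ((k:ℝ)+s) * Real.Gamma ((k:ℝ)+s) := by
    rw [show ((k:ℝ)+1+s) = ((k:ℝ)+s)+1 by ring]
    exact Real.Gamma_add_one (by positivity)
  have G6 : Real.Gamma ((k:ℝ)+1+1) = ((k:ℝ)+1) * Real.Gamma ((k:ℝ)+1) :=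
    Real.Gamma_add_one (by positivity)
  rw [G1, G2, G3, G4, G5, G6]
  have h1 : Real.Gamma s ≠ 0 := (Real.Gamma_pos_of_pos hs).ne'
  have h2 : Real.Gamma t ≠ 0 := (Real.Gamma_pos_of_pos ht).ne'
  have h3 : Real.Gamma (s+t+((k:ℝ)+(d:ℝ))) ≠ 0 := (Real.Gamma_pos_of_pos (by positivity)).ne'
  have h4 : Real.Gamma ((k:ℝ)+1) ≠ 0 := (Real.Gamma_pos_of_pos (by positivity)).ne'
  have h5 : Real.Gamma ((d:ℝ)+1) ≠ 0 := (Real.Gamma_pos_of_pos (by positivity)).ne'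
  have h6 : s+t+(k:ℝ)+(d:ℝ) ≠ 0 := by positivity
  have h7 : (d:ℝ)+1 ≠ 0 := by positivity
  have h8 : (k:ℝ)+1 ≠ 0 := by positivity
  field_simp
  ring

lemma sum_shift (s t : ℝ) (hs : 0 < s) (ht : 0 < t) (n : ℕ) (g : ℕ → ℝ) :
    ((n:ℝ)+1) * ∑ k ∈ Finset.range (n+1), wBB s t n k * g k
    = ∑ k ∈ Finset.range (n+2), wBB s t (n+1) k * (((n:ℝ)+1-k) * g k + (k:ℝ) * g (k-1)) := by
  have split : ∑ k ∈ Finset.range (n+2), wBB s t (n+1) k * (((n:ℝ)+1-k) * g k + (k:ℝ) * g (k-1))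
      = (∑ k ∈ Finset.range (n+2), wBB s t (n+1) k * (((n:ℝ)+1-k) * g k))
        + ∑ k ∈ Finset.range (n+2), wBB s t (n+1) k * ((k:ℝ) * g (k-1)) := by
    rw [← Finset.sum_add_distrib]
    exact Finset.sum_congr rfl fun k _ => by ring
  rw [split]
  have first : ∑ k ∈ Finset.range (n+2), wBB s t (n+1) k * (((n:ℝ)+1-k) * g k)
      = ∑ k ∈ Finset.range (n+1), wBB s t (n+1) k * (((n:ℝ)+1-k) * g k) := by
    rw [Finset.sum_range_succ]
    have : ((n:ℝ)+1-((n+1:ℕ):ℝ)) = 0 := by push_cast; ring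
    push_cast
    rw [show ((n:ℝ)+1-((n:ℝ)+1)) = 0 by ring]
    ring
  have second : ∑ k ∈ Finset.range (n+2), wBB s t (n+1) k * ((k:ℝ) * g (k-1))
      = ∑ k ∈ Finset.range (n+1), wBB s t (n+1) (k+1) * (((k:ℝ)+1) * g k) := by
    rw [Finset.sum_range_succ']
    simp only [Nat.cast_zero, zero_mul, mul_zero, add_zero]
    refine Finset.sum_congr rfl fun k _ => by push_cast; simp
  rw [first, second, ← Finset.sum_add_distrib, Finset.mul_sum]
  refine Finset.sum_congr rfl fun k hk => ?_
  have hk' : k ≤ n := by simpa [Nat.lt_succ_iff] using hk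
  have h := wBB_key s t hs ht n k hk'
  linear_combination (-(g k)) * h

lemma wBB_zero (s t : ℝ) (hs : 0 < s) (ht : 0 < t) : wBB s t 0 0 = 1 := by
  unfold wBB
  simp only [Nat.cast_zero, Nat.sub_zero, zero_add, add_zero, Real.Gamma_one]
  have h1 : Real.Gamma s ≠ 0 := (Real.Gamma_pos_of_pos hs).ne'
  have h2 : Real.Gamma t ≠ 0 := (Real.Gamma_pos_of_pos ht).ne'
  have h3 : Real.Gamma (s+t) ≠ 0 := (Real.Gamma_pos_of_pos (by positivity)).ne'
  field_simp

lemma wBB_sum (s t : ℝ) (hs : 0 < s) (ht : 0 < t) (n : ℕ) :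
    ∑ k ∈ Finset.range (n+1), wBB s t n k = 1 := by
  induction n with
  | zero => simpa using wBB_zero s t hs ht
  | succ n ih =>
    have h := sum_shift s t hs ht n (fun _ => 1)
    simp only [mul_one] at h
    rw [ih, mul_one] at h
    have h2 : ∑ k ∈ Finset.range (n+2), wBB s t (n+1) k * (((n:ℝ)+1-k) + (k:ℝ))
        = ((n:ℝ)+1) * ∑ k ∈ Finset.range (n+2), wBB s t (n+1) k := by
      rw [Finset.mul_sum]
      exact Finset.sum_congr rfl fun k _ => by ring
    rw [h2] at h
    have hne : ((n:ℝ)+1) ≠ 0 := by positivity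
    exact (mul_left_cancel₀ hne ((mul_one ((n:ℝ)+1)).trans h)).symm

lemma pointA (f : ℕ → ℕ → ℝ) (n m k l : ℕ) (hk : k ≤ n) :
    ((n-k+l:ℕ):ℝ) * f (n-k+l-1) (m-l+k)
      = ((n-k:ℕ):ℝ) * f (n-1-k+l) (m-l+k) + (l:ℝ) * f (n-k+l-1) (m-l+k) := by
  rcases eq_or_lt_of_le hk with h | h
  · subst h
    simp [Nat.sub_self]
  · have h1 : n - 1 - k + l = n - k + l - 1 := by omega
    have h2 : ((n-k+l:ℕ):ℝ) = ((n-k:ℕ):ℝ) + l := by push_cast; ring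
    rw [h1, h2]; ring

lemma pointB (f : ℕ → ℕ → ℝ) (n m k l : ℕ) (hl : l ≤ m) :
    ((m-l+k:ℕ):ℝ) * f (n-k+l) (m-l+k-1)
      = ((m-l:ℕ):ℝ) * f (n-k+l) (m-1-l+k) + (k:ℝ) * f (n-k+l) (m-l+k-1) := by
  rcases eq_or_lt_of_le hl with h | h
  · subst h
    simp [Nat.sub_self]
  · have h1 : m - 1 - l + k = m - l + k - 1 := by omega
    have h2 : ((m-l+k:ℕ):ℝ) = ((m-l:ℕ):ℝ) + k := by push_cast; ring
    rw [h1, h2]; ring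

lemma partA (s t : ℝ) (hs : 0 < s) (ht : 0 < t) (f : ℕ → ℕ → ℝ) (n m : ℕ) :
    (n:ℝ) * ∑ k ∈ Finset.range (n-1+1), ∑ l ∈ Finset.range (m+1),
        wBB s t (n-1) k * wBB s t m l * f (n-1-k+l) (m-l+k)
    = ∑ k ∈ Finset.range (n+1), ∑ l ∈ Finset.range (m+1), wBB s t n k * wBB s t m l *
        (((n-k:ℕ):ℝ) * f (n-1-k+l) (m-l+k) + (k:ℝ) * f (n-k+l) (m-l+k-1)) := by
  cases n with
  | zero => simp
  | succ n' =>
    simp only [Nat.add_sub_cancel]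
    have inner : ∀ k, ∑ l ∈ Finset.range (m+1), wBB s t n' k * wBB s t m l * f (n'-k+l) (m-l+k)
        = wBB s t n' k * ∑ l ∈ Finset.range (m+1), wBB s t m l * f (n'-k+l) (m-l+k) := by
      intro k
      rw [Finset.mul_sum]
      exact Finset.sum_congr rfl fun l _ => by ring
    push_cast
    rw [Finset.sum_congr rfl fun k _ => inner k,
        sum_shift s t hs ht n' (fun k => ∑ l ∈ Finset.range (m+1), wBB s t m l * f (n'-k+l) (m-l+k))]
    refine Finset.sum_congr rfl fun k hk => ?_
    have hk' : k ≤ n' + 1 := by simpa [Nat.lt_succ_iff] using hk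
    have hc : ((n'+1-k:ℕ):ℝ) = (n':ℝ)+1-k := by
      rw [Nat.cast_sub hk']; push_cast; ring
    rw [Finset.mul_sum, Finset.mul_sum, mul_add, Finset.mul_sum, Finset.mul_sum,
        ← Finset.sum_add_distrib]
    refine Finset.sum_congr rfl fun l _ => ?_
    rcases Nat.eq_zero_or_pos k with rfl | hkpos
    · simp only [Nat.cast_zero, zero_mul, mul_zero, add_zero]
      rw [hc]; push_cast; ring
    · have e1 : n' - (k-1) + l = n' + 1 - k + l := by omega
      have e2 : m - l + (k-1) = m - l + k - 1 := by omega
      rw [e1, e2, hc]; ring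

lemma partB (s t : ℝ) (hs : 0 < s) (ht : 0 < t) (f : ℕ → ℕ → ℝ) (n m : ℕ) :
    (m:ℝ) * ∑ k ∈ Finset.range (n+1), ∑ l ∈ Finset.range (m-1+1),
        wBB s t n k * wBB s t (m-1) l * f (n-k+l) (m-1-l+k)
    = ∑ k ∈ Finset.range (n+1), ∑ l ∈ Finset.range (m+1), wBB s t n k * wBB s t m l *
        (((m-l:ℕ):ℝ) * f (n-k+l) (m-1-l+k) + (l:ℝ) * f (n-k+l-1) (m-l+k)) := by
  cases m with
  | zero => simp
  | succ m' =>
    simp only [Nat.add_sub_cancel]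
    rw [Finset.sum_comm]
    conv_rhs => rw [Finset.sum_comm]
    have inner : ∀ l, ∑ k ∈ Finset.range (n+1), wBB s t n k * wBB s t m' l * f (n-k+l) (m'-l+k)
        = wBB s t m' l * ∑ k ∈ Finset.range (n+1), wBB s t n k * f (n-k+l) (m'-l+k) := by
      intro l
      rw [Finset.mul_sum]
      exact Finset.sum_congr rfl fun k _ => by ring
    push_cast
    rw [Finset.sum_congr rfl fun l _ => inner l,
        sum_shift s t hs ht m' (fun l => ∑ k ∈ Finset.range (n+1), wBB s t n k * f (n-k+l) (m'-l+k))]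
    refine Finset.sum_congr rfl fun l hl => ?_
    have hl' : l ≤ m' + 1 := by simpa [Nat.lt_succ_iff] using hl
    have hc : ((m'+1-l:ℕ):ℝ) = (m':ℝ)+1-l := by
      rw [Nat.cast_sub hl']; push_cast; ring
    rw [Finset.mul_sum, Finset.mul_sum, mul_add, Finset.mul_sum, Finset.mul_sum,
        ← Finset.sum_add_distrib]
    refine Finset.sum_congr rfl fun k _ => ?_
    rcases Nat.eq_zero_or_pos l with rfl | hlpos
    · simp only [Nat.cast_zero, zero_mul, mul_zero, add_zero]
      rw [hc]; push_cast; ring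
    · have e1 : n - k + (l-1) = n - k + l - 1 := by omega
      have e2 : m' - (l-1) + k = m' + 1 - l + k := by omega
      rw [e1, e2, hc]; ring

lemma discGen_eq (s t : ℝ) (hs : 0 < s) (ht : 0 < t) (f : ℕ → ℕ → ℝ) (n m : ℕ) :
    discGen s t f n m
      = (∑ k ∈ Finset.range (n+1), ∑ l ∈ Finset.range (m+1),
          wBB s t n k * wBB s t m l * f (n-k+l) (m-l+k)) - f n m := by
  unfold discGen rRate
  have step : ∀ k ∈ Finset.range (n+1),
      ∑ l ∈ Finset.range (m+1), wBB s t n k * wBB s t m l * (f (n-k+l) (m-l+k) - f n m)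
      = (∑ l ∈ Finset.range (m+1), wBB s t n k * wBB s t m l * f (n-k+l) (m-l+k))
        - wBB s t n k * f n m := by
    intro k _
    have c1 : ∑ l ∈ Finset.range (m+1), wBB s t n k * wBB s t m l * (f (n-k+l) (m-l+k) - f n m)
        = (∑ l ∈ Finset.range (m+1), wBB s t n k * wBB s t m l * f (n-k+l) (m-l+k))
          - ∑ l ∈ Finset.range (m+1), wBB s t n k * wBB s t m l * f n m := by
      rw [← Finset.sum_sub_distrib]
      exact Finset.sum_congr rfl fun l _ => by ring
    have c2 : ∑ l ∈ Finset.range (m+1), wBB s t n k * wBB s t m l * f n m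
        = wBB s t n k * f n m := by
      have : ∑ l ∈ Finset.range (m+1), wBB s t n k * wBB s t m l * f n m
          = wBB s t n k * f n m * ∑ l ∈ Finset.range (m+1), wBB s t m l := by
        rw [Finset.mul_sum]
        exact Finset.sum_congr rfl fun l _ => by ring
      rw [this, wBB_sum s t hs ht m, mul_one]
    rw [c1, c2]
  rw [Finset.sum_congr rfl step, Finset.sum_sub_distrib]
  have c3 : ∑ k ∈ Finset.range (n+1), wBB s t n k * f n m = f n m := by
    rw [← Finset.sum_mul, wBB_sum s t hs ht n, one_mul]
  rw [c3]

/-- The generator of the discrete dual process commutes with the SU(1,1)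
lowering operator `K⁻₁ + K⁻₂`: `𝓛((K⁻₁+K⁻₂)f) = (K⁻₁+K⁻₂)(𝓛 f)`. -/
theorem discrete_generator_commutes_with_lowering
    (s t : ℝ) (hs : 0 < s) (ht : 0 < t) (f : ℕ → ℕ → ℝ) (n m : ℕ) :
    discGen s t (Kminus f) n m = Kminus (discGen s t f) n m := by
  have hA := partA s t hs ht f n m
  have hB := partB s t hs ht f n m
  rw [discGen_eq s t hs ht (Kminus f) n m]
  simp only [Kminus]
  rw [discGen_eq s t hs ht f (n-1) m, discGen_eq s t hs ht f n (m-1)]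
  have hsum : ∑ k ∈ Finset.range (n+1), ∑ l ∈ Finset.range (m+1),
        wBB s t n k * wBB s t m l *
          (((n-k+l:ℕ):ℝ) * f (n-k+l-1) (m-l+k) + ((m-l+k:ℕ):ℝ) * f (n-k+l) (m-l+k-1))
      = (∑ k ∈ Finset.range (n+1), ∑ l ∈ Finset.range (m+1), wBB s t n k * wBB s t m l *
          (((n-k:ℕ):ℝ) * f (n-1-k+l) (m-l+k) + (k:ℝ) * f (n-k+l) (m-l+k-1)))
        + ∑ k ∈ Finset.range (n+1), ∑ l ∈ Finset.range (m+1), wBB s t n k * wBB s t m l *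
          (((m-l:ℕ):ℝ) * f (n-k+l) (m-1-l+k) + (l:ℝ) * f (n-k+l-1) (m-l+k)) := by
    rw [← Finset.sum_add_distrib]
    refine Finset.sum_congr rfl fun k hk => ?_
    rw [← Finset.sum_add_distrib]
    refine Finset.sum_congr rfl fun l hl => ?_
    have hk' : k ≤ n := by simpa [Nat.lt_succ_iff] using hk
    have hl' : l ≤ m := by simpa [Nat.lt_succ_iff] using hl
    rw [pointA f n m k l hk', pointB f n m k l hl']
    ring
  linear_combination hsum - hA - hB
end
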